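/- Let (ρ_K, v_K, p_K), K ∈ {L, R}, be two one-dimensional primitive states with ρ_K > 0, p_K > 0, |v_K| < 1, and suppose ρ_L ≠ ρ_R and ρ_L/p_L ≠ ρ_R/p_R. Set θ_K = p_K/ρ_K, γ_K = 1/√(1−v_K²), and the parameter variables z₁ = ρ, z₂ = ρ/p, z₃ = γv. Let h_L, h_R, S_L, S_R be arbitrary real numbers (in the application h_K = 1+e(θ_K)+θ_K and S_K = −ln ρ_K + σ(θ_K) for a Synge-type EOS). Define the entropy variables W_K = (z₂,K h_K − S_K, z₃,K z₂,K, −z₂,K γ_K) ∈ ℝ³ and the entropy potential ψ_K = z₁,K z₃,K. With jump [a] = a_R − a_L, arithmetic mean {{a}} = (a_L+a_R)/2, and logarithmic mean {{a}}_ln = (a_R−a_L)/(ln a_R − ln a_L), define E = ([W₁] − [ln z₁])/[z₂], ρĥ = ({{z₁}}/{{z₂}} + {{z₁}}_ln · E)/({{γ}}² − {{z₃}}²), and the two-point flux F̃ = ({{z₁}}_ln{{z₃}}, ρĥ{{z₃}}² + {{z₁}}/{{z₂}}, ρĥ{{γ}}{{z₃}}) ∈ ℝ³. Then {{γ}}²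 − {{z₃}}² > 0 and (W_R − W_L) · F̃ = ψ_R − ψ_L; i.e., F̃ is a two-point entropy conservative numerical flux for 1D relativistic hydrodynamics. -/

import Mathlib

set_option maxRecDepth 8000

open Matrix

/-- The unified two-point entropy conservative numerical flux for 1D RHD with
general Synge-type EOS: with parameter variables `z₁ = ρ`, `z₂ = ρ/p`, `z₃ = γv`,
entropy variables `W = (z₂h − S, z₃z₂, −z₂γ)` and entropy potential `ψ = z₁z₃`,
the flux `F̃ = ({{z₁}}_ln{{z₃}}, ρĥ{{z₃}}² + {{z₁}}/{{z₂}}, ρĥ{{γ}}{{z₃}})` satisfies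
`{{γ}}² − {{z₃}}² > 0` and `(W_R − W_L) · F̃ = ψ_R − ψ_L`. -/
theorem stmt6 (ρL pL vL ρR pR vR hL hR SL SR : ℝ)
    (hρL : 0 < ρL) (hpL : 0 < pL) (hvL : |vL| < 1)
    (hρR : 0 < ρR) (hpR : 0 < pR) (hvR : |vR| < 1)
    (hne1 : ρL ≠ ρR) (hne2 : ρL / pL ≠ ρR / pR) :
    let γL : ℝ := 1 / Real.sqrt (1 - vL ^ 2)
    let γR : ℝ := 1 / Real.sqrt (1 - vR ^ 2)
    let z1L : ℝ := ρL
    let z1R : ℝ := ρR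
    let z2L : ℝ := ρL / pL
    let z2R : ℝ := ρR / pR
    let z3L : ℝ := γL * vL
    let z3R : ℝ := γR * vR
    let WL : Fin 3 → ℝ := ![z2L * hL - SL, z3L * z2L, -(z2L * γL)]
    let WR : Fin 3 → ℝ := ![z2R * hR - SR, z3R * z2R, -(z2R * γR)]
    let ψL : ℝ := z1L * z3L
    let ψR : ℝ := z1R * z3R
    let az1 : ℝ := (z1L + z1R) / 2
    let az2 : ℝ := (z2L + z2R) / 2
    let az3 : ℝ := (z3L + z3R) / 2
    let aγ : ℝ := (γL + γR) / 2
    let lz1 : ℝ := (z1R - z1L) / (Real.log z1R - Real.log z1L)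
    let E : ℝ := ((z2R * hR - SR) - (z2L * hL - SL) - (Real.log z1R - Real.log z1L))
      / (z2R - z2L)
    let ρh : ℝ := (az1 / az2 + lz1 * E) / (aγ ^ 2 - az3 ^ 2)
    let Ftil : Fin 3 → ℝ := ![lz1 * az3, ρh * az3 ^ 2 + az1 / az2, ρh * aγ * az3]
    0 < aγ ^ 2 - az3 ^ 2 ∧ (WR - WL) ⬝ᵥ Ftil = ψR - ψL := by
  intro γL γR z1L z1R z2L z2R z3L z3R WL WR ψL ψR az1 az2 az3 aγ lz1 E ρh Ftil
  have h1L : (0:ℝ) < 1 - vL ^ 2 := by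
    have := abs_lt.mp hvL; nlinarith [this.1, this.2]
  have h1R : (0:ℝ) < 1 - vR ^ 2 := by
    have := abs_lt.mp hvR; nlinarith [this.1, this.2]
  have hγLpos : 0 < γL := by
    simp only [γL]; positivity
  have hγRpos : 0 < γR := by
    simp only [γR]; positivity
  have hsL : Real.sqrt (1 - vL ^ 2) ^ 2 = 1 - vL ^ 2 := Real.sq_sqrt h1L.le
  have hsR : Real.sqrt (1 - vR ^ 2) ^ 2 = 1 - vR ^ 2 := Real.sq_sqrt h1R.le
  have hsLne : Real.sqrt (1 - vL ^ 2) ≠ 0 := by positivity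
  have hsRne : Real.sqrt (1 - vR ^ 2) ≠ 0 := by positivity
  have hgL : γL ^ 2 * (1 - vL ^ 2) = 1 := by
    simp only [γL]; rw [div_pow, one_pow, hsL]; field_simp
  have hgR : γR ^ 2 * (1 - vR ^ 2) = 1 := by
    simp only [γR]; rw [div_pow, one_pow, hsR]; field_simp
  have hvv : 1 - vL * vR > 0 := by
    have h1 := abs_lt.mp hvL; have h2 := abs_lt.mp hvR
    nlinarith [h1.1, h1.2, h2.1, h2.2]
  have hDeq : aγ ^ 2 - az3 ^ 2 = (2 + 2 * (γL * γR) * (1 - vL * vR)) / 4 := by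
    simp only [aγ, az3, z3L, z3R]
    linear_combination (1/4) * hgL + (1/4) * hgR
  have hD : 0 < aγ ^ 2 - az3 ^ 2 := by
    rw [hDeq]; positivity
  refine ⟨hD, ?_⟩
  -- auxiliary facts
  have hz2L : 0 < z2L := by simp only [z2L]; positivity
  have hz2R : 0 < z2R := by simp only [z2R]; positivity
  have haz2 : az2 ≠ 0 := by simp only [az2]; positivity
  have hd2 : z2R - z2L ≠ 0 := sub_ne_zero.mpr (Ne.symm hne2)
  have hlog : Real.log z1R - Real.log z1L ≠ 0 := by
    refine sub_ne_zero.mpr fun h => hne1 ?_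
    have : Real.exp (Real.log z1L) = Real.exp (Real.log z1R) := by rw [h]
    rwa [Real.exp_log hρL, Real.exp_log hρR] at this
  have ha : lz1 * (Real.log z1R - Real.log z1L) = z1R - z1L := by
    simp only [lz1]; field_simp
  have hb : (z2R * hR - SR) - (z2L * hL - SL)
      = E * (z2R - z2L) + (Real.log z1R - Real.log z1L) := by
    simp only [E]; field_simp; ring
  have hc : ρh * (aγ ^ 2 - az3 ^ 2) = az1 / az2 + lz1 * E := by
    simp only [ρh]; field_simp
  have he : az1 / az2 * az2 = az1 := div_mul_cancel₀ _ haz2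
  have hgL2 : γL ^ 2 - z3L ^ 2 = 1 := by
    simp only [z3L]; linear_combination hgL
  have hgR2 : γR ^ 2 - z3R ^ 2 = 1 := by
    simp only [z3R]; linear_combination hgR
  have hd : az3 * (z3R - z3L) = aγ * (γR - γL) := by
    linear_combination (1/2) * hgL - (1/2) * hgR
  show (WR - WL) ⬝ᵥ Ftil = ψR - ψL
  simp only [WR, WL, Ftil, ψR, ψL, dotProduct, Fin.sum_univ_three, Pi.sub_apply,
    Matrix.cons_val_zero, Matrix.cons_val_one, Matrix.head_cons, Matrix.cons_val_two,
    Matrix.tail_cons]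
  clear_value Ftil ρh E lz1 ψR ψL WR WL z3R z3L z2R z2L z1R z1L γR γL
  linear_combination lz1 * az3 * hb - az3 * (z2R - z2L) * hc + az3 * ha
    + (z3R - z3L) * he + ρh * az2 * hd
    + ρh * (z2L + z2R) * (z3L + z3R - 2) / 8 * hgL2
    - ρh * (z2L + z2R) * (z3L + z3R - 2) / 8 * hgR2
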